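/- Suppose a'/r' < a/r < a''/r'' are rationals with positive denominators satisfying a = a' + a'' and r = r' + r''. Write these fractions in lowest terms as b'/s' < b/s < b''/s''. If there is no rational number in the open interval (a'/r', a/r) with denominator less than r, then at least one of a'/r' or a/r is already in lowest terms (i.e. s' = r' or s = r). -/

import Mathlib

lemma two_mul_le_of_dvd_of_ne {d n : ℤ} (hd : 0 < d) (hn : 0 < n)
    (hdvd : d ∣ n) (hne : d ≠ n) : 2 * d ≤ n := by
  obtain ⟨k, hk⟩ := hdvd
  have hkpos : 0 < k := by by_contra h; push_neg at h; nlinarith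
  have hk2 : 2 ≤ k := by
    rcases eq_or_lt_of_le (Int.add_one_le_iff.mpr hkpos) with h | h
    · exfalso; apply hne; simp [hk, ← h]
    · omega
  nlinarith

/-- Suppose `a'/r' < a/r < a''/r''` are rationals with positive denominators satisfying
`a = a' + a''` and `r = r' + r''`.  If there is no rational number in the open interval
`(a'/r', a/r)` with denominator less than `r`, then at least one of `a'/r'` or `a/r`
is already in lowest terms. -/
theorem reduced_of_no_small_denominator_between
    (a' a a'' r' r r'' : ℤ) (hr' : 0 < r') (hr : 0 < r) (hr'' : 0 < r'')
    (ha : a = a' + a'') (hrr : r = r' + r'')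
    (h1 : (a' : ℚ) / r' < (a : ℚ) / r) (h2 : (a : ℚ) / r < (a'' : ℚ) / r'')
    (hgap : ∀ q : ℚ, (a' : ℚ) / r' < q → q < (a : ℚ) / r → r ≤ (q.den : ℤ)) :
    ((((a' : ℚ) / (r' : ℚ)).den : ℤ) = r') ∨ ((((a : ℚ) / (r : ℚ)).den : ℤ) = r) := by
  by_contra hcon
  push_neg at hcon
  obtain ⟨hs', hs⟩ := hcon
  set x : ℚ := (a' : ℚ) / r' with hx
  set y : ℚ := (a : ℚ) / r with hy
  have hdvd' : ((x.den : ℤ)) ∣ r' := by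
    have := Rat.den_dvd a' r'
    rwa [Rat.divInt_eq_div] at this
  have hdvd : ((y.den : ℤ)) ∣ r := by
    have := Rat.den_dvd a r
    rwa [Rat.divInt_eq_div] at this
  have hxd : (0:ℤ) < x.den := by exact_mod_cast x.pos
  have hyd : (0:ℤ) < y.den := by exact_mod_cast y.pos
  have h2x : 2 * (x.den : ℤ) ≤ r' := two_mul_le_of_dvd_of_ne hxd hr' hdvd' hs'
  have h2y : 2 * (y.den : ℤ) ≤ r := two_mul_le_of_dvd_of_ne hyd hr hdvd hs
  -- the mediant of x and y
  set q : ℚ := ((x.num + y.num : ℤ) : ℚ) / (((x.den : ℤ) + y.den : ℤ) : ℚ) with hq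
  have hxden : (0:ℚ) < (x.den : ℚ) := by exact_mod_cast hxd
  have hyden : (0:ℚ) < (y.den : ℚ) := by exact_mod_cast hyd
  have hsumZ : (0:ℤ) < (x.den : ℤ) + y.den := by linarith
  have hsumQ : (0:ℚ) < (((x.den : ℤ) + y.den : ℤ) : ℚ) := by exact_mod_cast hsumZ
  have key : (x.num : ℚ) * y.den < (y.num : ℚ) * x.den := by
    have h : (x.num : ℚ) / x.den < (y.num : ℚ) / y.den := by
      rw [Rat.num_div_den, Rat.num_div_den]; exact h1
    exact (div_lt_div_iff₀ hxden hyden).mp h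
  have hxq : x < q := by
    have h : (x.num : ℚ) / x.den < q := by
      rw [hq, div_lt_div_iff₀ hxden hsumQ]; push_cast; nlinarith
    rwa [Rat.num_div_den] at h
  have hqy : q < y := by
    have h : q < (y.num : ℚ) / y.den := by
      rw [hq, div_lt_div_iff₀ hsumQ hyden]; push_cast; nlinarith
    rwa [Rat.num_div_den] at h
  have hqden : ((q.den : ℤ)) ∣ ((x.den : ℤ) + y.den) := by
    have := Rat.den_dvd (x.num + y.num) ((x.den : ℤ) + y.den)
    rwa [Rat.divInt_eq_div] at this
  have hqle : (q.den : ℤ) ≤ (x.den : ℤ) + y.den := Int.le_of_dvd hsumZ hqden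
  have := hgap q hxq hqy
  omega
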